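/- Let ≡_B be a bisimulation relation on a finite MDP: sᵢ ≡_B sⱼ implies r(sᵢ,a) = r(sⱼ,a) for all actions a, and P(G | sᵢ, a) = P(G | sⱼ, a) for all a and all equivalence classes G of B. Then bisimilar states have equal optimal value: sᵢ ≡_B sⱼ implies V*(sᵢ) = V*(sⱼ). -/
import Mathlib

open Finset Classical
noncomputable section
open scoped Classical

/-- Bisimilar states of a finite MDP have equal optimal value. -/
theorem bisimulation_optimal_value_eq {S A : Type*} [Fintype S] [Fintype A] [Nonempty A]
    (r : S → A → ℝ) (P : S → A → S → ℝ) (γ : ℝ)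
    (hγ : 0 ≤ γ) (hγ1 : γ < 1)
    (hP : ∀ s a, (∀ s', 0 ≤ P s a s') ∧ ∑ s', P s a s' = 1)
    (B : S → S → Prop) (hB : Equivalence B)
    -- bisimilar states have equal rewards for every action
    (hBr : ∀ si sj, B si sj → ∀ a, r si a = r sj a)
    -- bisimilar states have equal transition mass to every equivalence class
    (hBP : ∀ si sj, B si sj → ∀ a (t : S),
      ∑ s' ∈ univ.filter (fun s' => B t s'), P si a s' =
      ∑ s' ∈ univ.filter (fun s' => B t s'), P sj a s')
    (Vstar : S → ℝ)
    (hV : ∀ s, Vstar s = ⨆ a, (r s a + γ * ∑ s', P s a s' * Vstar s')) :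
    ∀ si sj, B si sj → Vstar si = Vstar sj := by
  classical
  intro si sj hij
  set T : Finset (S × S) := univ.filter (fun p => B p.1 p.2) with hT
  have hTne : T.Nonempty := ⟨(si, sj), by simp [hT, hij]⟩
  set M : ℝ := T.sup' hTne (fun p => |Vstar p.1 - Vstar p.2|) with hM
  have hMmem : ∀ x y, B x y → |Vstar x - Vstar y| ≤ M := by
    intro x y h
    exact Finset.le_sup' (f := fun p : S × S => |Vstar p.1 - Vstar p.2|)
      (by simp [hT, h] : (x, y) ∈ T)
  have hM0 : 0 ≤ M := le_trans (abs_nonneg _) (hMmem si sj hij)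
  letI st : Setoid S := ⟨B, hB⟩
  letI : DecidableRel ((· ≈ ·) : S → S → Prop) := fun _ _ => Classical.dec _
  -- key: transition-weighted value difference bounded by M
  have key : ∀ x y, B x y → ∀ a,
      (∑ s', P x a s' * Vstar s') - (∑ s', P y a s' * Vstar s') ≤ M := by
    intro x y hxy a
    have hx := (Finset.sum_fiberwise univ (fun s' => Quotient.mk st s')
      (fun s' => P x a s' * Vstar s'))
    have hy := (Finset.sum_fiberwise univ (fun s' => Quotient.mk st s')
      (fun s' => P y a s' * Vstar s'))
    have hmassfib := (Finset.sum_fiberwise univ (fun s' => Quotient.mk st s')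
      (fun s' => P x a s'))
    -- per-class estimate
    have main : ∀ q : Quotient st,
        ((∑ s' ∈ univ.filter (fun s' => Quotient.mk st s' = q), P x a s' * Vstar s')
          - ∑ s' ∈ univ.filter (fun s' => Quotient.mk st s' = q), P y a s' * Vstar s')
        ≤ M * ∑ s' ∈ univ.filter (fun s' => Quotient.mk st s' = q), P x a s' := by
      intro q
      set F : Finset S := univ.filter (fun s' => Quotient.mk st s' = q) with hF
      have hFne : F.Nonempty := ⟨q.out, by simp [hF, Quotient.out_eq]⟩
      have hFmem : ∀ {u v : S}, u ∈ F → v ∈ F → B u v := by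
        intro u v hu hv
        simp only [hF, Finset.mem_filter] at hu hv
        have : Quotient.mk st u = Quotient.mk st v := hu.2.trans hv.2.symm
        exact Quotient.exact this
      -- equal masses on the class
      have hFfilter : ∀ t ∈ F, F = univ.filter (fun s' => B t s') := by
        intro t ht
        ext s'
        simp only [hF, Finset.mem_filter, Finset.mem_univ, true_and]
        constructor
        · intro h
          have ht' : Quotient.mk st t = q := by
            simpa [hF] using ht
          exact Quotient.exact (ht'.trans h.symm)
        · intro h
          have ht' : Quotient.mk st t = q := by simpa [hF] using ht
          have : Quotient.mk st s' = Quotient.mk st t := Quotient.sound (hB.symm h)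
          exact this.trans ht'
      have hmass : ∑ s' ∈ F, P x a s' = ∑ s' ∈ F, P y a s' := by
        obtain ⟨t, ht⟩ := hFne
        rw [hFfilter t ht]
        exact hBP x y hxy a t
      have hmass0 : 0 ≤ ∑ s' ∈ F, P x a s' :=
        Finset.sum_nonneg fun s' _ => (hP x a).1 s'
      obtain ⟨u, hu, humax⟩ := F.exists_max_image Vstar hFne
      obtain ⟨w, hw, hwmin⟩ := F.exists_min_image Vstar hFne
      have hub : ∑ s' ∈ F, P x a s' * Vstar s' ≤ Vstar u * ∑ s' ∈ F, P x a s' := by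
        rw [Finset.mul_sum]
        refine Finset.sum_le_sum fun s' hs' => ?_
        rw [mul_comm (Vstar u)]
        exact mul_le_mul_of_nonneg_left (humax s' hs') ((hP x a).1 s')
      have hlb : Vstar w * ∑ s' ∈ F, P y a s' ≤ ∑ s' ∈ F, P y a s' * Vstar s' := by
        rw [Finset.mul_sum]
        refine Finset.sum_le_sum fun s' hs' => ?_
        rw [mul_comm (Vstar w)]
        exact mul_le_mul_of_nonneg_left (hwmin s' hs') ((hP y a).1 s')
      have hdiff : Vstar u - Vstar w ≤ M :=
        (le_abs_self _).trans (hMmem u w (hFmem hu hw))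
      calc (∑ s' ∈ F, P x a s' * Vstar s') - ∑ s' ∈ F, P y a s' * Vstar s'
          ≤ Vstar u * (∑ s' ∈ F, P x a s') - Vstar w * (∑ s' ∈ F, P y a s') := by
            linarith
        _ = (Vstar u - Vstar w) * ∑ s' ∈ F, P x a s' := by rw [hmass]; ring
        _ ≤ M * ∑ s' ∈ F, P x a s' :=
            mul_le_mul_of_nonneg_right hdiff hmass0
    calc (∑ s', P x a s' * Vstar s') - (∑ s', P y a s' * Vstar s')
        = ∑ q : Quotient st,
            (((∑ s' ∈ univ.filter (fun s' => Quotient.mk st s' = q), P x a s' * Vstar s')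
              - ∑ s' ∈ univ.filter (fun s' => Quotient.mk st s' = q), P y a s' * Vstar s')) := by
          rw [Finset.sum_sub_distrib, hx, hy]
      _ ≤ ∑ q : Quotient st,
            M * ∑ s' ∈ univ.filter (fun s' => Quotient.mk st s' = q), P x a s' :=
          Finset.sum_le_sum fun q _ => main q
      _ = M * ∑ s', P x a s' := by rw [← Finset.mul_sum, hmassfib]
      _ = M := by rw [(hP x a).2, mul_one]
  -- one-sided contraction step
  have step : ∀ x y, B x y → Vstar x - Vstar y ≤ γ * M := by
    intro x y hxy
    obtain ⟨a0, ha0⟩ := Finite.exists_max (fun a => r x a + γ * ∑ s', P x a s' * Vstar s')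
    have hbx : BddAbove (Set.range fun a => r x a + γ * ∑ s', P x a s' * Vstar s') :=
      (Set.finite_range _).bddAbove
    have hby : BddAbove (Set.range fun a => r y a + γ * ∑ s', P y a s' * Vstar s') :=
      (Set.finite_range _).bddAbove
    have hx : Vstar x = r x a0 + γ * ∑ s', P x a0 s' * Vstar s' := by
      rw [hV x]
      exact le_antisymm (ciSup_le ha0) (le_ciSup hbx a0)
    have hy : r y a0 + γ * ∑ s', P y a0 s' * Vstar s' ≤ Vstar y := by
      rw [hV y]
      exact le_ciSup hby a0
    have hk := key x y hxy a0
    have hr := hBr x y hxy a0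
    nlinarith [hk, hγ]
  -- conclude M ≤ γ M, hence M = 0
  obtain ⟨p0, hp0, hp0eq⟩ := Finset.exists_mem_eq_sup' hTne
    (fun p : S × S => |Vstar p.1 - Vstar p.2|)
  have hBp0 : B p0.1 p0.2 := by simpa [hT] using hp0
  have hMeq : M = |Vstar p0.1 - Vstar p0.2| := hM.trans hp0eq
  have hMle : M ≤ γ * M := by
    calc M = |Vstar p0.1 - Vstar p0.2| := hMeq
      _ ≤ γ * M := abs_sub_le_iff.mpr ⟨step _ _ hBp0, step _ _ (hB.symm hBp0)⟩
  have hMz : M = 0 := by nlinarith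
  have := hMmem si sj hij
  rw [hMz] at this
  have := abs_nonpos_iff.mp this
  linarith [this, sub_eq_zero.mp this]
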